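/- Every automorphism φ of the 4-dimensional complex Novikov algebra N⁴₀₁ (with nonzero products e₁e₁ = e₂, e₁e₂ = e₃, e₂e₁ = e₄) has matrix, in the basis e₁, e₂, e₃, e₄, of the form with columns: φ(e₁) = x e₁ + y e₂ + z e₃ + v e₄, φ(e₂) = x² e₂ + xy e₃ + xy e₄, φ(e₃) = x³ e₃, φ(e₄) = x³ e₄, for some x, y, z, v ∈ ℂ with x ≠ 0; conversely every such map is an automorphism. -/

import Mathlib

noncomputable def mulN401 (a b : Fin 4 → ℂ) : Fin 4 → ℂ :=
  ![0, a 0 * b 0, a 0 * b 1, a 1 * b 0]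

lemma pi_decomp (w : Fin 4 → ℂ) :
    w = w 0 • (Pi.single 0 1 : Fin 4 → ℂ) + w 1 • (Pi.single 1 1 : Fin 4 → ℂ)
      + w 2 • (Pi.single 2 1 : Fin 4 → ℂ) + w 3 • (Pi.single 3 1 : Fin 4 → ℂ) := by
  funext i; fin_cases i <;> simp [Pi.single_apply]

theorem N401_automorphisms :
    (∀ φ : (Fin 4 → ℂ) ≃ₗ[ℂ] (Fin 4 → ℂ),
      (∀ a b : Fin 4 → ℂ, φ (mulN401 a b) = mulN401 (φ a) (φ b)) →
      ∃ x y z v : ℂ, x ≠ 0 ∧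
        φ (Pi.single 0 1) = x • (Pi.single 0 1 : Fin 4 → ℂ)
          + y • (Pi.single 1 1 : Fin 4 → ℂ)
          + z • (Pi.single 2 1 : Fin 4 → ℂ)
          + v • (Pi.single 3 1 : Fin 4 → ℂ) ∧
        φ (Pi.single 1 1) = x ^ 2 • (Pi.single 1 1 : Fin 4 → ℂ)
          + (x * y) • (Pi.single 2 1 : Fin 4 → ℂ)
          + (x * y) • (Pi.single 3 1 : Fin 4 → ℂ) ∧
        φ (Pi.single 2 1) = x ^ 3 • (Pi.single 2 1 : Fin 4 → ℂ) ∧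
        φ (Pi.single 3 1) = x ^ 3 • (Pi.single 3 1 : Fin 4 → ℂ)) ∧
    (∀ (ψ : (Fin 4 → ℂ) →ₗ[ℂ] (Fin 4 → ℂ)) (x y z v : ℂ), x ≠ 0 →
      ψ (Pi.single 0 1) = x • (Pi.single 0 1 : Fin 4 → ℂ)
        + y • (Pi.single 1 1 : Fin 4 → ℂ)
        + z • (Pi.single 2 1 : Fin 4 → ℂ)
        + v • (Pi.single 3 1 : Fin 4 → ℂ) →
      ψ (Pi.single 1 1) = x ^ 2 • (Pi.single 1 1 : Fin 4 → ℂ)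
        + (x * y) • (Pi.single 2 1 : Fin 4 → ℂ)
        + (x * y) • (Pi.single 3 1 : Fin 4 → ℂ) →
      ψ (Pi.single 2 1) = x ^ 3 • (Pi.single 2 1 : Fin 4 → ℂ) →
      ψ (Pi.single 3 1) = x ^ 3 • (Pi.single 3 1 : Fin 4 → ℂ) →
      Function.Bijective ψ ∧
        ∀ a b : Fin 4 → ℂ, ψ (mulN401 a b) = mulN401 (ψ a) (ψ b)) := by
  constructor
  · intro φ hmul
    set x := φ (Pi.single 0 1) 0 with hx
    set y := φ (Pi.single 0 1) 1 with hy
    set z := φ (Pi.single 0 1) 2 with hz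
    set v := φ (Pi.single 0 1) 3 with hv
    have he1 : (Pi.single 1 1 : Fin 4 → ℂ)
        = mulN401 (Pi.single 0 1) (Pi.single 0 1) := by
      funext i; fin_cases i <;> simp [mulN401, Pi.single_apply]
    have key1 : φ (Pi.single 1 1) = ![0, x * x, x * y, y * x] := by
      rw [he1, hmul]
      funext i; fin_cases i <;> simp [mulN401, hx, hy]
    have he2 : (Pi.single 2 1 : Fin 4 → ℂ)
        = mulN401 (Pi.single 0 1) (Pi.single 1 1) := by
      funext i; fin_cases i <;> simp [mulN401, Pi.single_apply]
    have key2 : φ (Pi.single 2 1) = ![0, 0, x * (x * x), 0] := by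
      rw [he2, hmul, key1]
      funext i; fin_cases i <;> simp [mulN401, hx]
    have he3 : (Pi.single 3 1 : Fin 4 → ℂ)
        = mulN401 (Pi.single 1 1) (Pi.single 0 1) := by
      funext i; fin_cases i <;> simp [mulN401, Pi.single_apply]
    have key3 : φ (Pi.single 3 1) = ![0, 0, 0, x * x * x] := by
      rw [he3, hmul, key1]
      funext i; fin_cases i <;> simp [mulN401, hx]
    have hxne : x ≠ 0 := by
      intro h
      have h2 : φ (Pi.single 2 1) = 0 := by
        rw [key2, h]; funext i; fin_cases i <;> simp
      have := φ.injective (h2.trans (map_zero φ).symm)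
      have := congrFun this 2
      simp at this
    refine ⟨x, y, z, v, hxne, ?_, ?_, ?_, ?_⟩
    · exact pi_decomp _
    · rw [key1]; funext i; fin_cases i <;> simp [Pi.single_apply] <;> ring
    · rw [key2]; funext i; fin_cases i <;> simp [Pi.single_apply] <;> ring
    · rw [key3]; funext i; fin_cases i <;> simp [Pi.single_apply] <;> ring
  · intro ψ x y z v hx h0 h1 h2 h3
    have hpsi : ∀ w : Fin 4 → ℂ, ψ w
        = ![x * w 0, y * w 0 + x ^ 2 * w 1,
            z * w 0 + x * y * w 1 + x ^ 3 * w 2,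
            v * w 0 + x * y * w 1 + x ^ 3 * w 3] := by
      intro w
      conv_lhs => rw [pi_decomp w]
      rw [map_add, map_add, map_add, map_smul, map_smul, map_smul, map_smul,
        h0, h1, h2, h3]
      funext i; fin_cases i <;> simp [Pi.single_apply] <;> ring
    have hinj : Function.Injective ψ := by
      rw [← LinearMap.ker_eq_bot, LinearMap.ker_eq_bot']
      intro w hw
      rw [hpsi] at hw
      have c0 : x * w 0 = 0 := congrFun hw 0
      have w0 : w 0 = 0 := by rcases mul_eq_zero.mp c0 with h | h; exact absurd h hx; exact h
      have c1 : y * w 0 + x ^ 2 * w 1 = 0 := congrFun hw 1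
      rw [w0, mul_zero, zero_add] at c1
      have w1 : w 1 = 0 := by
        rcases mul_eq_zero.mp c1 with h | h
        · exact absurd h (pow_ne_zero _ hx)
        · exact h
      have c2 : z * w 0 + x * y * w 1 + x ^ 3 * w 2 = 0 := congrFun hw 2
      rw [w0, w1, mul_zero, mul_zero, zero_add, zero_add] at c2
      have w2 : w 2 = 0 := by
        rcases mul_eq_zero.mp c2 with h | h
        · exact absurd h (pow_ne_zero _ hx)
        · exact h
      have c3 : v * w 0 + x * y * w 1 + x ^ 3 * w 3 = 0 := congrFun hw 3
      rw [w0, w1, mul_zero, mul_zero, zero_add, zero_add] at c3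
      have w3 : w 3 = 0 := by
        rcases mul_eq_zero.mp c3 with h | h
        · exact absurd h (pow_ne_zero _ hx)
        · exact h
      funext i; fin_cases i <;> simpa using (by assumption : _)
    refine ⟨⟨hinj, LinearMap.injective_iff_surjective.mp hinj⟩, ?_⟩
    intro a b
    rw [hpsi, hpsi, hpsi]
    funext i; fin_cases i <;> simp [mulN401] <;> ring
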